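/- Let (G, R) be a Rota-Baxter group. Define a new multiplication on G by x ⋆ y = x·R(x)·y·R(x)⁻¹. Then (G, ⋆) is a group with the same identity element as G, the inverse of x in (G,⋆) is R(x)⁻¹ x⁻¹ R(x), and R is a group homomorphism from (G,⋆) to G, i.e. R(x ⋆ y) = R(x)R(y). -/

import Mathlib

/-- The descendant product `x ⋆ y = x · R x · y · (R x)⁻¹` on a Rota-Baxter group. -/
def rbStar {G : Type*} [Group G] (R : G → G) (x y : G) : G :=
  x * R x * y * (R x)⁻¹

/-- `(G, ⋆)` is a group with the same identity, inverse of `x` equal to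
`(R x)⁻¹ x⁻¹ (R x)`, and `R` is a homomorphism from `(G,⋆)` to `G`. -/
theorem stmt3 {G : Type*} [Group G] (R : G → G)
    (hR : ∀ g h : G, R g * R h = R (g * R g * h * (R g)⁻¹)) :
    (∀ x y z : G, rbStar R (rbStar R x y) z = rbStar R x (rbStar R y z)) ∧
    (∀ x : G, rbStar R 1 x = x) ∧
    (∀ x : G, rbStar R x 1 = x) ∧
    (∀ x : G, rbStar R x ((R x)⁻¹ * x⁻¹ * R x) = 1) ∧
    (∀ x : G, rbStar R ((R x)⁻¹ * x⁻¹ * R x) x = 1) ∧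
    (∀ x y : G, R (rbStar R x y) = R x * R y) := by
  have hom : ∀ x y : G, R (rbStar R x y) = R x * R y := fun x y => (hR x y).symm
  have hone : R 1 = 1 := by
    have h := hR 1 1
    have e : (1 : G) * R 1 * 1 * (R 1)⁻¹ = 1 := by group
    rw [e] at h
    exact mul_eq_right.mp h
  have hinv : ∀ x : G, R ((R x)⁻¹ * x⁻¹ * R x) = (R x)⁻¹ := by
    intro x
    have h1 : rbStar R x ((R x)⁻¹ * x⁻¹ * R x) = 1 := by
      simp only [rbStar]; group
    have h2 := hom x ((R x)⁻¹ * x⁻¹ * R x)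
    rw [h1, hone] at h2
    exact eq_inv_of_mul_eq_one_right h2.symm
  refine ⟨?_, ?_, ?_, ?_, ?_, hom⟩
  · intro x y z
    have h := hom x y
    simp only [rbStar] at h ⊢
    rw [h]; group
  · intro x; simp only [rbStar, hone]; group
  · intro x; simp only [rbStar]; group
  · intro x; simp only [rbStar]; group
  · intro x
    simp only [rbStar, hinv]; group
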